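/- Let S : ℝ → ℝ have two continuous bounded derivatives (|S'| ≤ L, |S''| ≤ M), let X solve dX_t = S(X_{t−ϑ₀})dt + ε dW_t with X_s = x₀ (s ≤ 0), x the deterministic solution, and x^{(1)} the solution of dx_t^{(1)} = S'(x_{t−ϑ₀}) x_{t−ϑ₀}^{(1)} dt + dW_t, x_s^{(1)} = 0 (s ≤ 0). Then for every t ∈ [0,T], E| (X_t − x_t)/ε − x_t^{(1)} |² → 0 as ε → 0. -/

import Mathlib

open MeasureTheory Set Filter
open scoped ENNReal NNReal

private lemma abs_sub_le_of_mem_uIcc' {a b y : ℝ} (h : y ∈ uIcc b a) : |y - b| ≤ |a - b| := by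
  rw [abs_le]
  rcases Set.mem_uIcc.1 h with ⟨h1, h2⟩ | ⟨h1, h2⟩ <;>
    constructor <;> nlinarith [le_abs_self (a - b), neg_abs_le (a - b)]

private lemma abs_sub_le_mul_of_deriv {f : ℝ → ℝ} (hf : Differentiable ℝ f) {L : ℝ}
    (hL : ∀ y, |deriv f y| ≤ L) (a b : ℝ) : |f a - f b| ≤ L * |a - b| := by
  have hL0 : 0 ≤ L := le_trans (abs_nonneg _) (hL 0)
  have hlip : LipschitzWith (NNReal.mk L hL0) f :=
    lipschitzWith_of_nnnorm_deriv_le hf (fun x => by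
      rw [← NNReal.coe_le_coe]
      simpa [Real.norm_eq_abs] using hL x)
  have := hlip.dist_le_mul a b
  simpa [Real.dist_eq] using this

private lemma taylor_abs_bound {S : ℝ → ℝ} (hS : ContDiff ℝ 2 S) {M : ℝ}
    (hM : ∀ y, |deriv (deriv S) y| ≤ M) (a b : ℝ) :
    |S a - S b - deriv S b * (a - b)| ≤ M * (a - b) ^ 2 := by
  have hdiff : Differentiable ℝ S := hS.differentiable two_ne_zero
  have hd1 : ContDiff ℝ 1 (deriv S) :=
    (contDiff_succ_iff_deriv.mp (show ContDiff ℝ (1 + 1) S by norm_num at hS ⊢; exact hS)).2.2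
  have hSd : Differentiable ℝ (deriv S) := hd1.differentiable one_ne_zero
  have hc : Continuous (deriv S) := hS.continuous_deriv one_le_two
  have hFTC : ∫ y in b..a, deriv S y = S a - S b :=
    intervalIntegral.integral_deriv_eq_sub (fun y _ => hdiff y)
      (hc.intervalIntegrable _ _)
  have key : S a - S b - deriv S b * (a - b) = ∫ y in b..a, (deriv S y - deriv S b) := by
    rw [intervalIntegral.integral_sub (hc.intervalIntegrable _ _) intervalIntegrable_const,
      hFTC, intervalIntegral.integral_const]
    simp [smul_eq_mul]; ring
  rw [key]
  have hbd : ∀ y ∈ Set.uIoc b a, ‖deriv S y - deriv S b‖ ≤ M * |a - b| := by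
    intro y hy
    have h1 := abs_sub_le_mul_of_deriv hSd hM y b
    have h2 := abs_sub_le_of_mem_uIcc' (Set.uIoc_subset_uIcc hy)
    have hM0 : 0 ≤ M := le_trans (abs_nonneg _) (hM 0)
    rw [Real.norm_eq_abs]
    nlinarith [abs_nonneg (y - b)]
  have := intervalIntegral.norm_integral_le_of_norm_le_const hbd
  rw [Real.norm_eq_abs] at this
  calc |∫ y in b..a, (deriv S y - deriv S b)| ≤ M * |a - b| * |a - b| := this
    _ = M * (a - b) ^ 2 := by rw [mul_assoc, abs_mul_abs_self]; ring

private lemma delay_gronwall {f : ℝ → ℝ} {ϑ T κ c : ℝ} (hϑ : 0 < ϑ) (hT : 0 < T)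
    (hκ : 0 ≤ κ) (hc : 0 ≤ c) (N : ℕ) (hN : T ≤ N * ϑ)
    (h0 : ∀ t ≤ (0:ℝ), |f t| ≤ c)
    (hrec : ∀ t, 0 < t → t ≤ T → ∀ B, 0 ≤ B → (∀ s, s ≤ T → s ≤ t - ϑ → |f s| ≤ B) →
      |f t| ≤ κ * T * B + c) :
    ∀ t ≤ T, |f t| ≤ c * (1 + κ * T) ^ N := by
  have hbase : (1:ℝ) ≤ 1 + κ * T := by nlinarith
  have key : ∀ n : ℕ, ∀ t, t ≤ T → t ≤ n * ϑ → |f t| ≤ c * (1 + κ * T) ^ n := by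
    intro n
    induction n with
    | zero =>
      intro t htT ht0
      simp only [Nat.cast_zero, zero_mul] at ht0
      simpa using h0 t ht0
    | succ n ih =>
      intro t htT htn
      have hp : (1:ℝ) ≤ (1 + κ * T) ^ n := one_le_pow₀ hbase
      rcases le_or_gt t 0 with h | h
      · refine (h0 t h).trans ?_
        have : (1:ℝ) ≤ (1 + κ * T) ^ (n+1) := one_le_pow₀ hbase
        nlinarith
      · have hB : 0 ≤ c * (1 + κ * T) ^ n := by positivity
        have hrec' := hrec t h htT _ hB (fun s hsT hs => ih s hsT (by
          push_cast at htn ⊢; linarith))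
        refine hrec'.trans ?_
        rw [pow_succ]
        nlinarith [mul_nonneg hκ hT.le]
  intro t htT
  exact key N t htT (htT.trans hN)

private noncomputable def gauss4 : ℝ≥0∞ :=
  ∫⁻ y, (ENNReal.ofReal |y|) ^ 4 ∂(ProbabilityTheory.gaussianReal 0 1)

private lemma gauss4_lt_top : gauss4 < ⊤ := by
  rw [gauss4, ProbabilityTheory.gaussianReal_of_var_ne_zero 0 one_ne_zero,
    lintegral_withDensity_eq_lintegral_mul _ (ProbabilityTheory.measurable_gaussianPDF 0 1)
      (continuous_abs.measurable.ennreal_ofReal.pow_const 4)]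
  have habs : ∀ y : ℝ, |y| ^ 4 = y ^ 4 := by
    intro y; rw [pow_abs]; exact abs_of_nonneg (by positivity)
  have hpt : ∀ y : ℝ, (ProbabilityTheory.gaussianPDF 0 1 y * (ENNReal.ofReal |y|) ^ 4)
      = ENNReal.ofReal (ProbabilityTheory.gaussianPDFReal 0 1 y * y ^ 4) := by
    intro y
    rw [ProbabilityTheory.gaussianPDF, ← ENNReal.ofReal_pow (abs_nonneg _), habs,
      ← ENNReal.ofReal_mul (ProbabilityTheory.gaussianPDFReal_nonneg 0 1 y)]
  have hint : Integrable (fun y : ℝ => ProbabilityTheory.gaussianPDFReal 0 1 y * y ^ 4) := by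
    have h1 : Integrable (fun y : ℝ => Real.exp (-(1/4 : ℝ) * y ^ 2)) :=
      integrable_exp_neg_mul_sq (by norm_num)
    have h2 : Integrable (fun y : ℝ => (Real.sqrt (2 * Real.pi * (1:ℝ≥0)))⁻¹ *
        (64 * Real.exp (-(1/4 : ℝ) * y ^ 2))) := (h1.const_mul 64).const_mul _
    refine h2.mono ?_ (Eventually.of_forall fun y => ?_)
    · apply Measurable.aestronglyMeasurable
      exact (ProbabilityTheory.measurable_gaussianPDFReal 0 1).mul ((measurable_id.pow_const 4))
    · rw [ProbabilityTheory.gaussianPDFReal]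
      have hs : 0 < Real.sqrt (2 * Real.pi * (1:ℝ≥0)) := Real.sqrt_pos.mpr (by positivity)
      rw [Real.norm_eq_abs, Real.norm_eq_abs]
      have he : y ^ 4 * Real.exp (-y ^ 2 / 2) ≤ 64 * Real.exp (-(1/4:ℝ) * y ^ 2) := by
        have hx : Real.exp (y^2/8) ≥ y^2/8 + 1 := by
          have := Real.add_one_le_exp (y^2/8); linarith
        have hsq : Real.exp (y^2/4) = Real.exp (y^2/8) ^ 2 := by
          rw [← Real.exp_nat_mul]; congr 1; push_cast; ring
        have h4 : y ^ 4 ≤ 64 * Real.exp (y^2/4) := by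
          rw [hsq]; nlinarith [Real.exp_pos (y^2/8), sq_nonneg y, sq_nonneg (y^2)]
        have hdecomp : Real.exp (-y^2/2) = Real.exp (-(1/4:ℝ) * y^2) / Real.exp (y^2/4) := by
          rw [← Real.exp_sub]; ring_nf
        rw [hdecomp]
        have hep := Real.exp_pos (y^2/4)
        calc y ^ 4 * (Real.exp (-(1/4:ℝ) * y^2) / Real.exp (y^2/4))
            = y ^ 4 / Real.exp (y^2/4) * Real.exp (-(1/4:ℝ) * y^2) := by ring
          _ ≤ 64 * Real.exp (-(1/4:ℝ) * y^2) := by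
              have : y ^ 4 / Real.exp (y^2/4) ≤ 64 := by
                rw [div_le_iff₀ hep]; linarith
              exact mul_le_mul_of_nonneg_right this (Real.exp_pos _).le
      have h0 : (0:ℝ) ≤ (Real.sqrt (2 * Real.pi * (1:ℝ≥0)))⁻¹ := by positivity
      rw [abs_of_nonneg (by positivity), abs_of_nonneg (by positivity)]
      calc (Real.sqrt (2 * Real.pi * (1:ℝ≥0)))⁻¹ * Real.exp (-(y - 0)^2/(2*(1:ℝ≥0))) * y ^ 4
          = (Real.sqrt (2 * Real.pi * (1:ℝ≥0)))⁻¹ * (y ^ 4 * Real.exp (-y^2/2)) := by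
            push_cast; ring_nf
        _ ≤ (Real.sqrt (2 * Real.pi * (1:ℝ≥0)))⁻¹ * (64 * Real.exp (-(1/4:ℝ) * y ^ 2)) :=
            mul_le_mul_of_nonneg_left he h0
  calc ∫⁻ y, (ProbabilityTheory.gaussianPDF 0 1 y * (ENNReal.ofReal |y|) ^ 4)
      = ∫⁻ y, ENNReal.ofReal (ProbabilityTheory.gaussianPDFReal 0 1 y * y ^ 4) := by
        simp_rw [hpt]
    _ < ⊤ := hint.lintegral_lt_top

private lemma lintegral_abs_pow4_gaussianReal (v : ℝ≥0) :
    ∫⁻ y, (ENNReal.ofReal |y|) ^ 4 ∂(ProbabilityTheory.gaussianReal 0 v)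
      = (v : ℝ≥0∞) ^ 2 * gauss4 := by
  by_cases hv : v = 0
  · subst hv
    rw [ProbabilityTheory.gaussianReal_zero_var, lintegral_dirac]
    simp
  · have hmap := ProbabilityTheory.gaussianReal_map_const_mul (μ := 0) (v := 1) (Real.sqrt v)
    have h2 : (NNReal.mk ((Real.sqrt v) ^ 2) (sq_nonneg _) * 1 : ℝ≥0) = v := by
      ext; simp [Real.sq_sqrt v.coe_nonneg]
    rw [mul_zero, h2] at hmap
    rw [← hmap, lintegral_map (continuous_abs.measurable.ennreal_ofReal.pow_const 4)
      (measurable_const_mul _)]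
    have hpt : ∀ x : ℝ, (ENNReal.ofReal |Real.sqrt v * x|) ^ 4
        = (v : ℝ≥0∞) ^ 2 * (ENNReal.ofReal |x|) ^ 4 := by
      intro x
      rw [abs_mul, ENNReal.ofReal_mul (abs_nonneg _), mul_pow]
      congr 1
      rw [abs_of_nonneg (Real.sqrt_nonneg _), ← ENNReal.ofReal_pow (Real.sqrt_nonneg _)]
      have : (Real.sqrt v) ^ 4 = (v : ℝ) ^ 2 := by
        rw [show (4:ℕ) = 2 * 2 from rfl, pow_mul, Real.sq_sqrt v.coe_nonneg]
      rw [this, ENNReal.ofReal_pow v.coe_nonneg, ENNReal.ofReal_coe_nnreal]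
    simp_rw [hpt]
    rw [lintegral_const_mul _ (continuous_abs.measurable.ennreal_ofReal.pow_const 4)]
    rfl

/-- A standard Wiener process on a probability space. -/
def IsWienerProcess {Ω : Type*} [MeasurableSpace Ω] (P : Measure Ω)
    (W : ℝ → Ω → ℝ) : Prop :=
  (∀ ω, W 0 ω = 0) ∧ (∀ ω, Continuous fun t => W t ω) ∧
  (∀ t, Measurable (W t)) ∧
  ∀ s t : ℝ, 0 ≤ s → s ≤ t →
    P.map (fun ω => W t ω - W s ω) =
      ProbabilityTheory.gaussianReal 0 (Real.toNNReal (t - s))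

set_option maxHeartbeats 1000000 in
/-- First-order `L²` expansion in `ε` of the small-noise delay diffusion:
`E|(X_t − x_t)/ε − x_t⁽¹⁾|² → 0` as `ε → 0`. -/
theorem first_order_L2_expansion {Ω : Type*} [MeasurableSpace Ω]
    (P : Measure Ω) [IsProbabilityMeasure P]
    (S : ℝ → ℝ) (hS : ContDiff ℝ 2 S) (L M : ℝ)
    (hL : ∀ y, |deriv S y| ≤ L) (hM : ∀ y, |deriv (deriv S) y| ≤ M)
    (T ϑ₀ x₀ : ℝ) (hT : 0 < T) (hϑ : 0 < ϑ₀)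
    (W : ℝ → Ω → ℝ) (hW : IsWienerProcess P W)
    (X : ℝ → ℝ → Ω → ℝ)
    (hXc : ∀ ε : ℝ, 0 < ε → ∀ ω, Continuous fun t => X ε t ω)
    (hXmeas : ∀ ε t : ℝ, Measurable fun ω => X ε t ω)
    (hXinit : ∀ ε : ℝ, 0 < ε → ∀ ω, ∀ s : ℝ, s ≤ 0 → X ε s ω = x₀)
    (hXeq : ∀ ε : ℝ, 0 < ε → ∀ ω, ∀ t ∈ Icc (0 : ℝ) T,
      X ε t ω = x₀ + (∫ s in (0 : ℝ)..t, S (X ε (s - ϑ₀) ω)) + ε * W t ω)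
    (x : ℝ → ℝ)
    (hxinit : ∀ s : ℝ, s ≤ 0 → x s = x₀)
    (hxeq : ∀ t ∈ Icc (0 : ℝ) T, x t = x₀ + ∫ s in (0 : ℝ)..t, S (x (s - ϑ₀)))
    (x1 : ℝ → Ω → ℝ) (hx1meas : ∀ t, Measurable (x1 t))
    (hx1init : ∀ ω, ∀ s : ℝ, s ≤ 0 → x1 s ω = 0)
    (hx1eq : ∀ ω, ∀ t ∈ Icc (0 : ℝ) T,
      x1 t ω = (∫ s in (0 : ℝ)..t, deriv S (x (s - ϑ₀)) * x1 (s - ϑ₀) ω) + W t ω) :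
    ∀ t ∈ Icc (0 : ℝ) T,
      Tendsto (fun ε : ℝ => ∫ ω, ((X ε t ω - x t) / ε - x1 t ω) ^ 2 ∂P)
        (nhdsWithin 0 (Ioi 0)) (nhds 0) := by
  obtain ⟨hW0, hWc, hWm, hWinc⟩ := hW
  have hL0 : 0 ≤ L := le_trans (abs_nonneg _) (hL 0)
  have hM0 : 0 ≤ M := le_trans (abs_nonneg _) (hM 0)
  have hScont : Continuous S := hS.continuous
  have hS'cont : Continuous (deriv S) := hS.continuous_deriv one_le_two
  have hSdiff : Differentiable ℝ S := hS.differentiable two_ne_zero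
  set N : ℕ := ⌈T / ϑ₀⌉₊ with hNdef
  have hNT : T ≤ N * ϑ₀ := by
    have h := Nat.le_ceil (T / ϑ₀)
    calc T = T / ϑ₀ * ϑ₀ := by field_simp
      _ ≤ N * ϑ₀ := mul_le_mul_of_nonneg_right h hϑ.le
  set K : ℝ := (1 + L * T) ^ N with hKdef
  have hKpos : 0 < K := pow_pos (by nlinarith) N
  have hK1 : 1 ≤ K := one_le_pow₀ (by nlinarith)
  -- continuity of the deterministic solution x
  have contx : ContinuousOn x (Iic T) := by
    have main : ∀ n : ℕ, ContinuousOn x (Iic (min (n * ϑ₀) T)) := by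
      intro n
      induction n with
      | zero =>
        rw [show ((0:ℕ) : ℝ) * ϑ₀ = 0 by simp, min_eq_left hT.le]
        exact continuousOn_const.congr (fun s hs => hxinit s hs)
      | succ n ih =>
        set b := min ((n + 1 : ℕ) * ϑ₀) T with hb
        have hb0 : 0 < b := lt_min (by positivity) hT
        have hbT : b ≤ T := min_le_right _ _
        have hble : b ≤ (n + 1 : ℕ) * ϑ₀ := min_le_left _ _
        have hbshift : b - ϑ₀ ≤ min (n * ϑ₀) T := by
          refine le_min ?_ (by linarith)
          push_cast at hble ⊢; linarith
        have hcont_h : ContinuousOn (fun s => S (x (s - ϑ₀))) (Iic b) := by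
          refine hScont.comp_continuousOn ?_
          refine ih.comp ((continuous_id.sub continuous_const).continuousOn) ?_
          intro s hs
          simp only [mem_Iic] at hs ⊢
          linarith
        have hint : IntervalIntegrable (fun s => S (x (s - ϑ₀))) volume 0 b := by
          apply ContinuousOn.intervalIntegrable
          apply hcont_h.mono
          rw [uIcc_of_le hb0.le]
          exact fun s hs => le_trans hs.2 le_rfl
        have hprim : ContinuousOn (fun u => ∫ s in (0:ℝ)..u, S (x (s - ϑ₀))) (uIcc (0:ℝ) b) :=
          intervalIntegral.continuousOn_primitive_interval' hint left_mem_uIcc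
        have hclamp : Continuous (fun u : ℝ => min (max u 0) b) :=
          (continuous_id.max continuous_const).min continuous_const
        have hmem : ∀ u : ℝ, min (max u 0) b ∈ uIcc (0:ℝ) b := by
          intro u
          rw [uIcc_of_le hb0.le, mem_Icc]
          exact ⟨le_min (le_max_right _ _) hb0.le, min_le_right _ _⟩
        have hF : Continuous (fun u => x₀ + ∫ s in (0:ℝ)..(min (max u 0) b), S (x (s - ϑ₀))) :=
          continuous_const.add (hprim.comp_continuous hclamp hmem)
        refine hF.continuousOn.congr ?_
        intro u hu
        simp only [mem_Iic] at hu
        dsimp only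
        rcases le_or_gt u 0 with h | h
        · rw [hxinit u h, max_eq_right h, min_eq_left hb0.le, intervalIntegral.integral_same,
            add_zero]
        · rw [max_eq_left h.le, min_eq_left hu]
          exact hxeq u ⟨h.le, le_trans hu hbT⟩
    have := main N
    rwa [min_eq_right hNT] at this
  -- continuity of x1 paths
  have contx1 : ∀ ω, ContinuousOn (fun s => x1 s ω) (Iic T) := by
    intro ω
    have main : ∀ n : ℕ, ContinuousOn (fun s => x1 s ω) (Iic (min (n * ϑ₀) T)) := by
      intro n
      induction n with
      | zero =>
        rw [show ((0:ℕ) : ℝ) * ϑ₀ = 0 by simp, min_eq_left hT.le]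
        exact continuousOn_const.congr (fun s hs => hx1init ω s hs)
      | succ n ih =>
        set b := min ((n + 1 : ℕ) * ϑ₀) T with hb
        have hb0 : 0 < b := lt_min (by positivity) hT
        have hbT : b ≤ T := min_le_right _ _
        have hble : b ≤ (n + 1 : ℕ) * ϑ₀ := min_le_left _ _
        have hbshift : b - ϑ₀ ≤ min (n * ϑ₀) T := by
          refine le_min ?_ (by linarith)
          push_cast at hble ⊢; linarith
        have hcont_h : ContinuousOn (fun s => deriv S (x (s - ϑ₀)) * x1 (s - ϑ₀) ω) (Iic b) := by
          apply ContinuousOn.mul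
          · refine hS'cont.comp_continuousOn ?_
            refine contx.comp ((continuous_id.sub continuous_const).continuousOn) ?_
            intro s hs
            simp only [mem_Iic] at hs ⊢
            linarith
          · refine ih.comp ((continuous_id.sub continuous_const).continuousOn) ?_
            intro s hs
            simp only [mem_Iic] at hs ⊢
            have := min_le_right ((n:ℝ) * ϑ₀) T
            linarith [min_le_left ((n:ℝ) * ϑ₀) T, hbshift]
        have hint : IntervalIntegrable (fun s => deriv S (x (s - ϑ₀)) * x1 (s - ϑ₀) ω)
            volume 0 b := by
          apply ContinuousOn.intervalIntegrable
          apply hcont_h.mono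
          rw [uIcc_of_le hb0.le]
          exact fun s hs => le_trans hs.2 le_rfl
        have hprim : ContinuousOn
            (fun u => ∫ s in (0:ℝ)..u, deriv S (x (s - ϑ₀)) * x1 (s - ϑ₀) ω)
            (uIcc (0:ℝ) b) :=
          intervalIntegral.continuousOn_primitive_interval' hint left_mem_uIcc
        have hclamp : Continuous (fun u : ℝ => min (max u 0) b) :=
          (continuous_id.max continuous_const).min continuous_const
        have hmem : ∀ u : ℝ, min (max u 0) b ∈ uIcc (0:ℝ) b := by
          intro u
          rw [uIcc_of_le hb0.le, mem_Icc]
          exact ⟨le_min (le_max_right _ _) hb0.le, min_le_right _ _⟩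
        have hFW : Continuous (fun u : ℝ => W (max u 0) ω) :=
          (hWc ω).comp (continuous_id.max continuous_const)
        have hF : Continuous (fun u =>
            (∫ s in (0:ℝ)..(min (max u 0) b), deriv S (x (s - ϑ₀)) * x1 (s - ϑ₀) ω)
              + W (max u 0) ω) :=
          (hprim.comp_continuous hclamp hmem).add hFW
        refine hF.continuousOn.congr ?_
        intro u hu
        simp only [mem_Iic] at hu
        dsimp only
        rcases le_or_gt u 0 with h | h
        · rw [hx1init ω u h, max_eq_right h, min_eq_left hb0.le,
            intervalIntegral.integral_same, hW0, add_zero]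
        · rw [max_eq_left h.le, min_eq_left hu]
          exact hx1eq ω u ⟨h.le, le_trans hu hbT⟩
    have := main N
    rwa [min_eq_right hNT] at this
  -- interval integrability helpers
  have hcx : ∀ u : ℝ, u ≤ T → IntervalIntegrable (fun s => S (x (s - ϑ₀))) volume 0 u := by
    intro u hu
    apply ContinuousOn.intervalIntegrable
    refine hScont.comp_continuousOn ?_
    refine contx.comp ((continuous_id.sub continuous_const).continuousOn) ?_
    intro s hs
    rw [Set.mem_uIcc] at hs
    simp only [mem_Iic]
    rcases hs with ⟨h1, h2⟩ | ⟨h1, h2⟩ <;> [skip; skip] <;>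
      first
      | (rcases le_or_gt u 0 with h | h <;> linarith)
      | linarith
  have hcx1 : ∀ ω, ∀ u : ℝ, u ≤ T →
      IntervalIntegrable (fun s => deriv S (x (s - ϑ₀)) * x1 (s - ϑ₀) ω) volume 0 u := by
    intro ω u hu
    apply ContinuousOn.intervalIntegrable
    refine ContinuousOn.mul ?_ ?_
    · refine hS'cont.comp_continuousOn ?_
      refine contx.comp ((continuous_id.sub continuous_const).continuousOn) ?_
      intro s hs
      rw [Set.mem_uIcc] at hs
      simp only [mem_Iic]
      rcases hs with ⟨h1, h2⟩ | ⟨h1, h2⟩ <;>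
        first
        | (rcases le_or_gt u 0 with h | h <;> linarith)
        | linarith
    · refine (contx1 ω).comp ((continuous_id.sub continuous_const).continuousOn) ?_
      intro s hs
      rw [Set.mem_uIcc] at hs
      simp only [mem_Iic]
      rcases hs with ⟨h1, h2⟩ | ⟨h1, h2⟩ <;>
        first
        | (rcases le_or_gt u 0 with h | h <;> linarith)
        | linarith
  have hIX : ∀ ε : ℝ, 0 < ε → ∀ ω, ∀ u : ℝ,
      IntervalIntegrable (fun s => S (X ε (s - ϑ₀) ω)) volume 0 u := fun ε hε ω u =>
    (hScont.comp ((hXc ε hε ω).comp (continuous_id.sub continuous_const))).intervalIntegrable _ _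
  -- pathwise bound for X - x
  have bndX : ∀ ε : ℝ, 0 < ε → ∀ ω, ∀ A : ℝ, 0 ≤ A → (∀ u ∈ Icc (0:ℝ) T, |W u ω| ≤ A) →
      ∀ s, s ≤ T → |X ε s ω - x s| ≤ ε * A * K := by
    intro ε hε ω A hA0 hA
    have h0 : ∀ u ≤ (0:ℝ), |X ε u ω - x u| ≤ ε * A := by
      intro u hu
      rw [hXinit ε hε ω u hu, hxinit u hu, sub_self, abs_zero]
      exact mul_nonneg hε.le hA0
    have hrec : ∀ u, 0 < u → u ≤ T → ∀ B, 0 ≤ B →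
        (∀ s, s ≤ T → s ≤ u - ϑ₀ → |X ε s ω - x s| ≤ B) →
        |X ε u ω - x u| ≤ L * T * B + ε * A := by
      intro u hu0 huT B hB0 hBs
      rw [hXeq ε hε ω u ⟨hu0.le, huT⟩, hxeq u ⟨hu0.le, huT⟩]
      have key : x₀ + (∫ s in (0:ℝ)..u, S (X ε (s - ϑ₀) ω)) + ε * W u ω
            - (x₀ + ∫ s in (0:ℝ)..u, S (x (s - ϑ₀)))
          = (∫ s in (0:ℝ)..u, (S (X ε (s - ϑ₀) ω) - S (x (s - ϑ₀)))) + ε * W u ω := by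
        rw [intervalIntegral.integral_sub (hIX ε hε ω u) (hcx u huT)]; ring
      rw [key]
      have hbd : ‖∫ s in (0:ℝ)..u, (S (X ε (s - ϑ₀) ω) - S (x (s - ϑ₀)))‖ ≤ L * B * |u - 0| := by
        apply intervalIntegral.norm_integral_le_of_norm_le_const
        intro s hsmem
        rw [Set.uIoc_of_le hu0.le] at hsmem
        obtain ⟨hs1, hs2⟩ := hsmem
        have hlip := abs_sub_le_mul_of_deriv hSdiff hL (X ε (s - ϑ₀) ω) (x (s - ϑ₀))
        have hB' := hBs (s - ϑ₀) (by linarith) (by linarith)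
        rw [Real.norm_eq_abs]
        nlinarith [abs_nonneg (X ε (s - ϑ₀) ω - x (s - ϑ₀))]
      rw [Real.norm_eq_abs] at hbd
      calc |(∫ s in (0:ℝ)..u, (S (X ε (s - ϑ₀) ω) - S (x (s - ϑ₀)))) + ε * W u ω|
          ≤ |∫ s in (0:ℝ)..u, (S (X ε (s - ϑ₀) ω) - S (x (s - ϑ₀)))| + |ε * W u ω| :=
            abs_add_le _ _
        _ ≤ L * B * |u - 0| + ε * A := by
            refine add_le_add hbd ?_
            rw [abs_mul, abs_of_pos hε]
            exact mul_le_mul_of_nonneg_left (hA u ⟨hu0.le, huT⟩) hε.le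
        _ ≤ L * T * B + ε * A := by
            rw [sub_zero, abs_of_pos hu0]
            nlinarith [mul_nonneg hL0 hB0]
    intro s hs
    have := delay_gronwall hϑ hT hL0 (mul_nonneg hε.le hA0) N hNT h0 hrec s hs
    calc |X ε s ω - x s| ≤ ε * A * (1 + L * T) ^ N := this
      _ = ε * A * K := by rw [hKdef]
  -- pathwise bound for x1
  have bndx1 : ∀ ω, ∀ A : ℝ, 0 ≤ A → (∀ u ∈ Icc (0:ℝ) T, |W u ω| ≤ A) →
      ∀ s, s ≤ T → |x1 s ω| ≤ A * K := by
    intro ω A hA0 hA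
    have h0 : ∀ u ≤ (0:ℝ), |x1 u ω| ≤ A := by
      intro u hu; rw [hx1init ω u hu, abs_zero]; exact hA0
    have hrec : ∀ u, 0 < u → u ≤ T → ∀ B, 0 ≤ B →
        (∀ s, s ≤ T → s ≤ u - ϑ₀ → |x1 s ω| ≤ B) → |x1 u ω| ≤ L * T * B + A := by
      intro u hu0 huT B hB0 hBs
      rw [hx1eq ω u ⟨hu0.le, huT⟩]
      have hbd : ‖∫ s in (0:ℝ)..u, deriv S (x (s - ϑ₀)) * x1 (s - ϑ₀) ω‖ ≤ L * B * |u - 0| := by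
        apply intervalIntegral.norm_integral_le_of_norm_le_const
        intro s hsmem
        rw [Set.uIoc_of_le hu0.le] at hsmem
        obtain ⟨hs1, hs2⟩ := hsmem
        have hB' := hBs (s - ϑ₀) (by linarith) (by linarith)
        rw [Real.norm_eq_abs, abs_mul]
        exact mul_le_mul (hL _) hB' (abs_nonneg _) hL0
      rw [Real.norm_eq_abs] at hbd
      calc |(∫ s in (0:ℝ)..u, deriv S (x (s - ϑ₀)) * x1 (s - ϑ₀) ω) + W u ω|
          ≤ |∫ s in (0:ℝ)..u, deriv S (x (s - ϑ₀)) * x1 (s - ϑ₀) ω| + |W u ω| := abs_add_le _ _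
        _ ≤ L * B * |u - 0| + A := add_le_add hbd (hA u ⟨hu0.le, huT⟩)
        _ ≤ L * T * B + A := by
            rw [sub_zero, abs_of_pos hu0]
            nlinarith [mul_nonneg hL0 hB0]
    intro s hs
    have := delay_gronwall hϑ hT hL0 hA0 N hNT h0 hrec s hs
    calc |x1 s ω| ≤ A * (1 + L * T) ^ N := this
      _ = A * K := by rw [hKdef]
  -- main pathwise bound
  have bndD : ∀ ε : ℝ, 0 < ε → ∀ ω, ∀ A : ℝ, 0 ≤ A → (∀ u ∈ Icc (0:ℝ) T, |W u ω| ≤ A) →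
      ∀ s, s ≤ T → |(X ε s ω - x s) / ε - x1 s ω| ≤ (ε * (T * M * A ^ 2 * K ^ 2)) * K := by
    intro ε hε ω A hA0 hA
    have hc0 : 0 ≤ ε * (T * M * A ^ 2 * K ^ 2) := by positivity
    have h0 : ∀ u ≤ (0:ℝ), |(X ε u ω - x u) / ε - x1 u ω| ≤ ε * (T * M * A ^ 2 * K ^ 2) := by
      intro u hu
      rw [hXinit ε hε ω u hu, hxinit u hu, hx1init ω u hu, sub_self, zero_div, sub_zero,
        abs_zero]
      exact hc0
    have hrec : ∀ u, 0 < u → u ≤ T → ∀ B, 0 ≤ B →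
        (∀ s, s ≤ T → s ≤ u - ϑ₀ → |(X ε s ω - x s) / ε - x1 s ω| ≤ B) →
        |(X ε u ω - x u) / ε - x1 u ω| ≤ L * T * B + ε * (T * M * A ^ 2 * K ^ 2) := by
      intro u hu0 huT B hB0 hBs
      have heq : (X ε u ω - x u) / ε - x1 u ω
          = ∫ s in (0:ℝ)..u,
              ((S (X ε (s - ϑ₀) ω) - S (x (s - ϑ₀))) / ε
                - deriv S (x (s - ϑ₀)) * x1 (s - ϑ₀) ω) := by
        rw [intervalIntegral.integral_sub (((hIX ε hε ω u).sub (hcx u huT)).div_const ε)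
            (hcx1 ω u huT),
          intervalIntegral.integral_div, intervalIntegral.integral_sub (hIX ε hε ω u)
            (hcx u huT),
          hXeq ε hε ω u ⟨hu0.le, huT⟩, hxeq u ⟨hu0.le, huT⟩, hx1eq ω u ⟨hu0.le, huT⟩]
        field_simp
        ring
      rw [heq]
      have hbd : ‖∫ s in (0:ℝ)..u,
          ((S (X ε (s - ϑ₀) ω) - S (x (s - ϑ₀))) / ε - deriv S (x (s - ϑ₀)) * x1 (s - ϑ₀) ω)‖
          ≤ (M * ε * A ^ 2 * K ^ 2 + L * B) * |u - 0| := by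
        apply intervalIntegral.norm_integral_le_of_norm_le_const
        intro s hsmem
        rw [Set.uIoc_of_le hu0.le] at hsmem
        obtain ⟨hs1, hs2⟩ := hsmem
        have htay := taylor_abs_bound hS hM (X ε (s - ϑ₀) ω) (x (s - ϑ₀))
        have hXb := bndX ε hε ω A hA0 hA (s - ϑ₀) (by linarith)
        have hfb := hBs (s - ϑ₀) (by linarith) (by linarith)
        have hsplit : (S (X ε (s - ϑ₀) ω) - S (x (s - ϑ₀))) / ε
              - deriv S (x (s - ϑ₀)) * x1 (s - ϑ₀) ω
            = (S (X ε (s - ϑ₀) ω) - S (x (s - ϑ₀))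
                - deriv S (x (s - ϑ₀)) * (X ε (s - ϑ₀) ω - x (s - ϑ₀))) / ε
              + deriv S (x (s - ϑ₀)) * ((X ε (s - ϑ₀) ω - x (s - ϑ₀)) / ε - x1 (s - ϑ₀) ω) := by
          field_simp
          ring
        rw [Real.norm_eq_abs, hsplit]
        have h1 : |(S (X ε (s - ϑ₀) ω) - S (x (s - ϑ₀))
              - deriv S (x (s - ϑ₀)) * (X ε (s - ϑ₀) ω - x (s - ϑ₀))) / ε|
            ≤ M * ε * A ^ 2 * K ^ 2 := by
          rw [abs_div, abs_of_pos hε, div_le_iff₀ hε]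
          have h2 : (X ε (s - ϑ₀) ω - x (s - ϑ₀)) ^ 2 ≤ (ε * A * K) ^ 2 := by
            have := sq_abs (X ε (s - ϑ₀) ω - x (s - ϑ₀))
            nlinarith [abs_nonneg (X ε (s - ϑ₀) ω - x (s - ϑ₀))]
          nlinarith [sq_nonneg (X ε (s - ϑ₀) ω - x (s - ϑ₀))]
        have h2 : |deriv S (x (s - ϑ₀)) * ((X ε (s - ϑ₀) ω - x (s - ϑ₀)) / ε
              - x1 (s - ϑ₀) ω)| ≤ L * B := by
          rw [abs_mul]
          exact mul_le_mul (hL _) hfb (abs_nonneg _) hL0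
        calc |_ + _| ≤ _ + _ := abs_add_le _ _
          _ ≤ M * ε * A ^ 2 * K ^ 2 + L * B := add_le_add h1 h2
      rw [Real.norm_eq_abs] at hbd
      calc |∫ s in (0:ℝ)..u, ((S (X ε (s - ϑ₀) ω) - S (x (s - ϑ₀))) / ε
              - deriv S (x (s - ϑ₀)) * x1 (s - ϑ₀) ω)|
          ≤ (M * ε * A ^ 2 * K ^ 2 + L * B) * |u - 0| := hbd
        _ ≤ L * T * B + ε * (T * M * A ^ 2 * K ^ 2) := by
            rw [sub_zero, abs_of_pos hu0]
            nlinarith [mul_nonneg hL0 hB0, mul_nonneg (mul_nonneg (mul_nonneg hM0 hε.le)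
              (sq_nonneg A)) (sq_nonneg K)]
    intro s hs
    have := delay_gronwall hϑ hT hL0 hc0 N hNT h0 hrec s hs
    calc |(X ε s ω - x s) / ε - x1 s ω| ≤ ε * (T * M * A ^ 2 * K ^ 2) * (1 + L * T) ^ N := this
      _ = ε * (T * M * A ^ 2 * K ^ 2) * K := by rw [hKdef]
  intro t ht
  -- dyadic increment maxima
  set tp : ℕ → ℕ → ℝ := fun n k => (k : ℝ) * (T / 2 ^ n) with htp
  set Mn : ℕ → Ω → ℝ≥0∞ := fun n ω =>
    (Finset.range (2 ^ n)).sup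
      (fun k => ENNReal.ofReal |W (tp n (k+1)) ω - W (tp n k) ω|) with hMn
  have hMnmeas : ∀ n, Measurable (Mn n) := by
    intro n
    have key : ∀ F : Finset ℕ, Measurable (fun ω =>
        F.sup (fun k => ENNReal.ofReal |W (tp n (k+1)) ω - W (tp n k) ω|)) := by
      intro F
      induction F using Finset.induction_on with
      | empty => simpa using measurable_const
      | insert a s ha ih =>
        simp only [Finset.sup_insert]
        exact Measurable.sup (((hWm _).sub (hWm _)).abs.ennreal_ofReal) ih
    exact key _
  set G : Ω → ℝ≥0∞ := fun ω => ∑' n, Mn n ω with hG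
  have hGmeas : Measurable G := Measurable.ennreal_tsum hMnmeas
  -- dyadic chaining
  have chain : ∀ ω (m j : ℕ), j ≤ 2 ^ m →
      ENNReal.ofReal |W (tp m j) ω| ≤ ∑ n ∈ Finset.range (m+1), Mn n ω := by
    intro ω m
    induction m with
    | zero =>
      intro j hj
      interval_cases j
      · have : tp 0 0 = 0 := by simp [htp]
        simp [this, hW0 ω]
      · have h1 : ENNReal.ofReal |W (tp 0 1) ω|
            = ENNReal.ofReal |W (tp 0 (0+1)) ω - W (tp 0 0) ω| := by
          have h0 : tp 0 0 = 0 := by simp [htp]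
          norm_num [h0, hW0 ω]
        rw [Finset.sum_range_one, h1, hMn]
        exact Finset.le_sup (f := fun k => ENNReal.ofReal |W (tp 0 (k+1)) ω - W (tp 0 k) ω|)
          (Finset.mem_range.mpr (by norm_num))
    | succ m ih =>
      intro j hj
      have hpow : (2:ℕ) ^ (m+1) = 2 * 2 ^ m := by ring
      rcases Nat.even_or_odd j with ⟨i, hi⟩ | ⟨i, hi⟩
      · have hi2 : i ≤ 2 ^ m := by omega
        have hteq : tp (m+1) j = tp m i := by
          subst hi
          show ((i + i : ℕ) : ℝ) * (T / 2 ^ (m+1)) = (i : ℝ) * (T / 2 ^ m)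
          push_cast
          field_simp
          ring
        rw [hteq]
        exact (ih i hi2).trans (Finset.sum_le_sum_of_subset
          (Finset.range_subset_range.mpr (by omega)))
      · have hji : j = 2*i+1 := by omega
        have hk : 2*i < 2 ^ (m+1) := by omega
        have hi2 : i ≤ 2 ^ m := by omega
        have hsplit : ENNReal.ofReal |W (tp (m+1) j) ω|
            ≤ ENNReal.ofReal |W (tp (m+1) (2*i)) ω|
              + ENNReal.ofReal |W (tp (m+1) (2*i+1)) ω - W (tp (m+1) (2*i)) ω| := by
          rw [← ENNReal.ofReal_add (abs_nonneg _) (abs_nonneg _)]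
          apply ENNReal.ofReal_le_ofReal
          rw [hji]
          have habs := abs_add_le (W (tp (m+1) (2*i)) ω)
            (W (tp (m+1) (2*i+1)) ω - W (tp (m+1) (2*i)) ω)
          simpa using habs
        have h2 : tp (m+1) (2*i) = tp m i := by
          show ((2*i : ℕ) : ℝ) * (T / 2 ^ (m+1)) = (i : ℝ) * (T / 2 ^ m)
          push_cast
          field_simp
          ring
        have h3 : ENNReal.ofReal |W (tp (m+1) (2*i+1)) ω - W (tp (m+1) (2*i)) ω|
            ≤ Mn (m+1) ω := by
          rw [hMn]
          exact Finset.le_sup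
            (f := fun k => ENNReal.ofReal |W (tp (m+1) (k+1)) ω - W (tp (m+1) k) ω|)
            (Finset.mem_range.mpr hk)
        calc ENNReal.ofReal |W (tp (m+1) j) ω|
            ≤ ENNReal.ofReal |W (tp (m+1) (2*i)) ω|
              + ENNReal.ofReal |W (tp (m+1) (2*i+1)) ω - W (tp (m+1) (2*i)) ω| := hsplit
          _ ≤ (∑ n ∈ Finset.range (m+1), Mn n ω) + Mn (m+1) ω := by
              refine add_le_add ?_ h3
              rw [h2]
              exact ih i hi2
          _ = ∑ n ∈ Finset.range (m+1+1), Mn n ω := (Finset.sum_range_succ _ _).symm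
  have chain2 : ∀ ω, ∀ u ∈ Icc (0:ℝ) T, ENNReal.ofReal |W u ω| ≤ G ω := by
    intro ω u hu
    have hfl : ∀ m : ℕ, ⌊u * 2 ^ m / T⌋₊ ≤ 2 ^ m := by
      intro m
      have hz : u * 2 ^ m / T ≤ ((2 ^ m : ℕ) : ℝ) := by
        push_cast
        rw [div_le_iff₀ hT]
        nlinarith [hu.1, hu.2, pow_pos (show (0:ℝ) < 2 by norm_num) m]
      calc ⌊u * 2 ^ m / T⌋₊ ≤ ⌊((2 ^ m : ℕ) : ℝ)⌋₊ := Nat.floor_le_floor hz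
        _ = 2 ^ m := Nat.floor_natCast _
    have key : ∀ m : ℕ, ENNReal.ofReal |W (tp m ⌊u * 2 ^ m / T⌋₊) ω| ≤ G ω := by
      intro m
      exact (chain ω m _ (hfl m)).trans (ENNReal.sum_le_tsum _)
    have hconv : Tendsto (fun m : ℕ => tp m ⌊u * 2 ^ m / T⌋₊) atTop (nhds u) := by
      rw [← tendsto_sub_nhds_zero_iff]
      apply squeeze_zero_norm (a := fun m : ℕ => T / 2 ^ m)
      · intro m
        have hz0 : (0:ℝ) ≤ u * 2 ^ m / T :=
          div_nonneg (mul_nonneg hu.1 (by positivity)) hT.le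
        have h1 := Nat.floor_le hz0
        have h2 := Nat.lt_floor_add_one (u * 2 ^ m / T)
        have hp : (0:ℝ) < 2 ^ m := by positivity
        have hueq : u = u * 2 ^ m / T * (T / 2 ^ m) := by field_simp
        rw [Real.norm_eq_abs, abs_le]
        constructor
        · show -(T / 2 ^ m) ≤ (⌊u * 2 ^ m / T⌋₊ : ℝ) * (T / 2 ^ m) - u
          nlinarith [div_pos hT hp]
        · show (⌊u * 2 ^ m / T⌋₊ : ℝ) * (T / 2 ^ m) - u ≤ T / 2 ^ m
          nlinarith [div_pos hT hp]
      · have h1 : Tendsto (fun m : ℕ => T * (1/2 : ℝ) ^ m) atTop (nhds 0) := by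
          have := tendsto_pow_atTop_nhds_zero_of_lt_one
            (show (0:ℝ) ≤ 1/2 by norm_num) (show (1/2:ℝ) < 1 by norm_num)
          simpa using this.const_mul T
        refine h1.congr (fun m => ?_)
        rw [one_div, inv_pow, ← div_eq_mul_inv]
    have hWten : Tendsto (fun m : ℕ => ENNReal.ofReal |W (tp m ⌊u * 2 ^ m / T⌋₊) ω|) atTop
        (nhds (ENNReal.ofReal |W u ω|)) := by
      apply (ENNReal.continuous_ofReal.tendsto _).comp
      apply (continuous_abs.tendsto _).comp
      exact (((hWc ω).tendsto u).comp hconv)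
    exact le_of_tendsto hWten (Eventually.of_forall key)
  -- fourth-moment bound for each level
  have hMn4 : ∀ n : ℕ, ∫⁻ ω, (Mn n ω) ^ (4:ℕ) ∂P
      ≤ (2 ^ n : ℕ) * ((ENNReal.ofReal (T / 2 ^ n)) ^ 2 * gauss4) := by
    intro n
    have hsup : ∀ ω, (Mn n ω) ^ (4:ℕ) ≤ ∑ k ∈ Finset.range (2 ^ n),
        (ENNReal.ofReal |W (tp n (k+1)) ω - W (tp n k) ω|) ^ (4:ℕ) := by
      intro ω
      have hcomm : (Mn n ω) ^ (4:ℕ) = (Finset.range (2 ^ n)).sup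
          (fun k => (ENNReal.ofReal |W (tp n (k+1)) ω - W (tp n k) ω|) ^ (4:ℕ)) := by
        rw [hMn]
        exact Finset.comp_sup_eq_sup_comp (fun z : ℝ≥0∞ => z ^ (4:ℕ))
          (fun a b => Monotone.map_max (fun u v huv => pow_le_pow_left' huv 4)) (by simp)
      rw [hcomm]
      exact Finset.sup_le (fun k hk => Finset.single_le_sum
        (f := fun k => (ENNReal.ofReal |W (tp n (k+1)) ω - W (tp n k) ω|) ^ (4:ℕ))
        (fun _ _ => zero_le) hk)
    calc ∫⁻ ω, (Mn n ω) ^ (4:ℕ) ∂P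
        ≤ ∫⁻ ω, ∑ k ∈ Finset.range (2 ^ n),
            (ENNReal.ofReal |W (tp n (k+1)) ω - W (tp n k) ω|) ^ (4:ℕ) ∂P :=
          lintegral_mono hsup
      _ = ∑ k ∈ Finset.range (2 ^ n),
            ∫⁻ ω, (ENNReal.ofReal |W (tp n (k+1)) ω - W (tp n k) ω|) ^ (4:ℕ) ∂P :=
          lintegral_finset_sum _
            (fun k _ => (((hWm _).sub (hWm _)).abs.ennreal_ofReal).pow_const 4)
      _ ≤ ∑ _k ∈ Finset.range (2 ^ n), ((ENNReal.ofReal (T / 2 ^ n)) ^ 2 * gauss4) := by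
          apply Finset.sum_le_sum
          intro k _
          have h0k : (0:ℝ) ≤ tp n k := by
            show (0:ℝ) ≤ (k : ℝ) * (T / 2 ^ n)
            positivity
          have hkk : tp n k ≤ tp n (k+1) := by
            show (k : ℝ) * (T / 2 ^ n) ≤ ((k + 1 : ℕ) : ℝ) * (T / 2 ^ n)
            have hd : (0:ℝ) ≤ T / 2 ^ n := by positivity
            push_cast
            nlinarith
          have hmap := hWinc (tp n k) (tp n (k+1)) h0k hkk
          have hch : ∫⁻ ω, (ENNReal.ofReal |W (tp n (k+1)) ω - W (tp n k) ω|) ^ (4:ℕ) ∂P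
              = ∫⁻ y, (ENNReal.ofReal |y|) ^ (4:ℕ)
                  ∂(ProbabilityTheory.gaussianReal 0
                      (Real.toNNReal (tp n (k+1) - tp n k))) := by
            rw [← hmap, lintegral_map (g := fun ω => W (tp n (k+1)) ω - W (tp n k) ω)
              (continuous_abs.measurable.ennreal_ofReal.pow_const 4)
              ((hWm _).sub (hWm _))]
          rw [hch, lintegral_abs_pow4_gaussianReal]
          have hd : tp n (k+1) - tp n k = T / 2 ^ n := by
            show ((k + 1 : ℕ) : ℝ) * (T / 2 ^ n) - (k : ℝ) * (T / 2 ^ n) = T / 2 ^ n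
            push_cast
            ring
          rw [hd]
          rfl
      _ = (2 ^ n : ℕ) * ((ENNReal.ofReal (T / 2 ^ n)) ^ 2 * gauss4) := by
          rw [Finset.sum_const, Finset.card_range, nsmul_eq_mul]
  -- finiteness of the fourth moment of G via Minkowski
  have hG4 : ∫⁻ ω, (G ω) ^ (4:ℕ) ∂P < ⊤ := by
    set Cb : ℝ≥0∞ := (ENNReal.ofReal (T ^ 2) * gauss4) ^ (1/4 : ℝ) with hCbdef
    set r : ℝ≥0∞ := (ENNReal.ofReal 2⁻¹) ^ (1/4 : ℝ) with hrdef
    have hterm : ∀ n : ℕ, ((2 ^ n : ℕ) : ℝ≥0∞) * ((ENNReal.ofReal (T / 2 ^ n)) ^ 2 * gauss4)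
        = (ENNReal.ofReal (T ^ 2) * gauss4) * (ENNReal.ofReal 2⁻¹) ^ n := by
      intro n
      have h1 : ((2 ^ n : ℕ) : ℝ≥0∞) = ENNReal.ofReal ((2:ℝ) ^ n) := by
        rw [ENNReal.ofReal_pow (by norm_num)]
        norm_num
      rw [h1, ← ENNReal.ofReal_pow (by positivity), ← mul_assoc,
        ← ENNReal.ofReal_mul (by positivity), ← ENNReal.ofReal_pow (by norm_num),
        mul_comm (ENNReal.ofReal (T ^ 2) * gauss4) _, ← mul_assoc,
        ← ENNReal.ofReal_mul (by positivity)]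
      congr 2
      field_simp
      rw [← mul_pow]; norm_num
    have hr1 : r < 1 := by
      rw [hrdef]
      apply ENNReal.rpow_lt_one (by
        rw [ENNReal.ofReal_lt_one]; norm_num) (by norm_num)
    have hCbne : Cb ≠ ⊤ := by
      rw [hCbdef]
      exact ENNReal.rpow_ne_top_of_nonneg (by norm_num)
        (ENNReal.mul_ne_top ENNReal.ofReal_ne_top gauss4_lt_top.ne)
    have hν : ∀ n : ℕ, (∫⁻ ω, (Mn n ω) ^ (4:ℝ) ∂P) ^ (1/4:ℝ) ≤ Cb * r ^ n := by
      intro n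
      have hnat : ∀ ω, (Mn n ω) ^ (4:ℝ) = (Mn n ω) ^ (4:ℕ) := by
        intro ω
        rw [show ((4:ℝ)) = ((4:ℕ):ℝ) by norm_num, ENNReal.rpow_natCast]
      have h1 : ∫⁻ ω, (Mn n ω) ^ (4:ℝ) ∂P
          ≤ (ENNReal.ofReal (T ^ 2) * gauss4) * (ENNReal.ofReal 2⁻¹) ^ n := by
        simp_rw [hnat]
        exact (hMn4 n).trans (le_of_eq (hterm n))
      calc (∫⁻ ω, (Mn n ω) ^ (4:ℝ) ∂P) ^ (1/4:ℝ)
          ≤ ((ENNReal.ofReal (T ^ 2) * gauss4) * (ENNReal.ofReal 2⁻¹) ^ n) ^ (1/4:ℝ) :=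
            ENNReal.rpow_le_rpow h1 (by norm_num)
        _ = Cb * r ^ n := by
            rw [ENNReal.mul_rpow_of_nonneg _ _ (by norm_num : (0:ℝ) ≤ 1/4)]
            congr 1
            rw [hrdef, ← ENNReal.rpow_natCast (ENNReal.ofReal 2⁻¹) n, ← ENNReal.rpow_mul,
              mul_comm (n:ℝ) (1/4:ℝ), ENNReal.rpow_mul, ENNReal.rpow_natCast]
    have hsum : ∀ m : ℕ, ∑ n ∈ Finset.range m, (∫⁻ ω, (Mn n ω) ^ (4:ℝ) ∂P) ^ (1/4:ℝ)
        ≤ Cb * (1 - r)⁻¹ := by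
      intro m
      calc ∑ n ∈ Finset.range m, (∫⁻ ω, (Mn n ω) ^ (4:ℝ) ∂P) ^ (1/4:ℝ)
          ≤ ∑ n ∈ Finset.range m, Cb * r ^ n := Finset.sum_le_sum (fun n _ => hν n)
        _ = Cb * ∑ n ∈ Finset.range m, r ^ n := by rw [Finset.mul_sum]
        _ ≤ Cb * ∑' n, r ^ n := mul_le_mul_right (ENNReal.sum_le_tsum _) _
        _ = Cb * (1 - r)⁻¹ := by rw [ENNReal.tsum_geometric]
    have mink : ∀ m : ℕ, (∫⁻ ω, (∑ n ∈ Finset.range m, Mn n ω) ^ (4:ℝ) ∂P) ^ (1/4:ℝ)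
        ≤ ∑ n ∈ Finset.range m, (∫⁻ ω, (Mn n ω) ^ (4:ℝ) ∂P) ^ (1/4:ℝ) := by
      intro m
      induction m with
      | zero =>
        have h04 : ((0:ℝ≥0∞)) ^ (4:ℝ) = 0 := ENNReal.zero_rpow_of_pos (by norm_num)
        simp only [Finset.range_zero, Finset.sum_empty, h04, lintegral_zero]
        rw [ENNReal.zero_rpow_of_pos (by norm_num : (0:ℝ) < 1/4)]
      | succ m ih =>
        have hmsum : Measurable (fun ω => ∑ n ∈ Finset.range m, Mn n ω) :=
          Finset.measurable_sum _ (fun n _ => hMnmeas n)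
        have hstep := ENNReal.lintegral_Lp_add_le (μ := P)
          (f := fun ω => ∑ n ∈ Finset.range m, Mn n ω) (g := Mn m)
          hmsum.aemeasurable (hMnmeas m).aemeasurable (by norm_num : (1:ℝ) ≤ 4)
        simp_rw [Finset.sum_range_succ]
        refine le_trans ?_ (add_le_add_left ih _)
        exact hstep
    have hpartial : ∀ m : ℕ, ∫⁻ ω, (∑ n ∈ Finset.range m, Mn n ω) ^ (4:ℕ) ∂P
        ≤ (Cb * (1 - r)⁻¹) ^ (4:ℝ) := by
      intro m
      have h1 := (mink m).trans (hsum m)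
      have h2 := ENNReal.rpow_le_rpow h1 (show (0:ℝ) ≤ 4 by norm_num)
      rw [← ENNReal.rpow_mul] at h2
      norm_num at h2
      have hnat : ∀ ω, (∑ n ∈ Finset.range m, Mn n ω) ^ (4:ℝ)
          = (∑ n ∈ Finset.range m, Mn n ω) ^ (4:ℕ) := by
        intro ω
        rw [show ((4:ℝ)) = ((4:ℕ):ℝ) by norm_num, ENNReal.rpow_natCast]
      first
      | exact h2
      | (simp_rw [hnat] at h2; exact h2)
      | (norm_num at h2 ⊢; exact h2)
    have hmeaspart : ∀ m : ℕ, Measurable (fun ω => (∑ n ∈ Finset.range m, Mn n ω) ^ (4:ℕ)) :=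
      fun m => (Finset.measurable_sum _ (fun n _ => hMnmeas n)).pow_const 4
    have hmono : Monotone (fun m : ℕ => fun ω => (∑ n ∈ Finset.range m, Mn n ω) ^ (4:ℕ)) := by
      intro m1 m2 hm ω
      exact pow_le_pow_left' (Finset.sum_le_sum_of_subset (Finset.range_subset_range.mpr hm)) 4
    have hlim : ∀ ω, (⨆ m : ℕ, (∑ n ∈ Finset.range m, Mn n ω) ^ (4:ℕ)) = (G ω) ^ (4:ℕ) := by
      intro ω
      have h1 : Tendsto (fun m : ℕ => ∑ n ∈ Finset.range m, Mn n ω) atTop (nhds (G ω)) :=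
        ENNReal.tendsto_nat_tsum _
      have h2 : Tendsto (fun m : ℕ => (∑ n ∈ Finset.range m, Mn n ω) ^ (4:ℕ)) atTop
          (nhds ((G ω) ^ (4:ℕ))) := ((ENNReal.continuous_pow 4).tendsto _).comp h1
      refine iSup_eq_of_tendsto ?_ h2
      intro m1 m2 hm
      exact pow_le_pow_left' (Finset.sum_le_sum_of_subset (Finset.range_subset_range.mpr hm)) 4
    calc ∫⁻ ω, (G ω) ^ (4:ℕ) ∂P
        = ∫⁻ ω, ⨆ m : ℕ, (∑ n ∈ Finset.range m, Mn n ω) ^ (4:ℕ) ∂P :=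
          lintegral_congr (fun ω => (hlim ω).symm)
      _ = ⨆ m : ℕ, ∫⁻ ω, (∑ n ∈ Finset.range m, Mn n ω) ^ (4:ℕ) ∂P :=
          lintegral_iSup hmeaspart hmono
      _ ≤ (Cb * (1 - r)⁻¹) ^ (4:ℝ) := iSup_le hpartial
      _ < ⊤ := by
          apply ENNReal.rpow_lt_top_of_nonneg (by norm_num)
          apply ENNReal.mul_ne_top hCbne
          rw [ENNReal.inv_ne_top]
          exact (tsub_pos_of_lt hr1).ne'
  -- conclusion
  set CB : ℝ := T * (M + 1) * K ^ 3 with hCBdef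
  have hCB0 : 0 < CB := by
    rw [hCBdef]; positivity
  have hptw : ∀ ε : ℝ, 0 < ε → ∀ ω,
      ENNReal.ofReal (((X ε t ω - x t) / ε - x1 t ω) ^ 2)
        ≤ ENNReal.ofReal (ε ^ 2 * CB ^ 2) * (G ω) ^ (4:ℕ) := by
    intro ε hε ω
    by_cases hGω : G ω = ⊤
    · rw [hGω, ENNReal.top_pow (by norm_num), ENNReal.mul_top (by
        rw [Ne, ENNReal.ofReal_eq_zero, not_le]
        positivity)]
      exact le_top
    · set A : ℝ := (G ω).toReal with hAdef
      have hA0 : (0:ℝ) ≤ A := ENNReal.toReal_nonneg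
      have hAb : ∀ u ∈ Icc (0:ℝ) T, |W u ω| ≤ A := by
        intro u hu
        have h1 := chain2 ω u hu
        rw [← ENNReal.ofReal_toReal hGω] at h1
        exact (ENNReal.ofReal_le_ofReal_iff hA0).mp h1
      have hD := bndD ε hε ω A hA0 hAb t ht.2
      have habs : |(X ε t ω - x t) / ε - x1 t ω| ≤ ε * CB * A ^ 2 := by
        refine hD.trans ?_
        rw [hCBdef]
        nlinarith [mul_nonneg (mul_nonneg (mul_nonneg hε.le hT.le) (sq_nonneg A))
          (pow_nonneg hKpos.le 3)]
      have hD2 : ((X ε t ω - x t) / ε - x1 t ω) ^ 2 ≤ ε ^ 2 * CB ^ 2 * A ^ 4 := by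
        calc ((X ε t ω - x t) / ε - x1 t ω) ^ 2
            = |(X ε t ω - x t) / ε - x1 t ω| ^ 2 := (sq_abs _).symm
          _ ≤ (ε * CB * A ^ 2) ^ 2 := pow_le_pow_left₀ (abs_nonneg _) habs 2
          _ = ε ^ 2 * CB ^ 2 * A ^ 4 := by ring
      calc ENNReal.ofReal (((X ε t ω - x t) / ε - x1 t ω) ^ 2)
          ≤ ENNReal.ofReal (ε ^ 2 * CB ^ 2 * A ^ 4) := ENNReal.ofReal_le_ofReal hD2
        _ = ENNReal.ofReal (ε ^ 2 * CB ^ 2) * ENNReal.ofReal (A ^ 4) :=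
            ENNReal.ofReal_mul (by positivity)
        _ = ENNReal.ofReal (ε ^ 2 * CB ^ 2) * (G ω) ^ (4:ℕ) := by
            rw [ENNReal.ofReal_pow hA0, ENNReal.ofReal_toReal hGω]
  set IG : ℝ≥0∞ := ∫⁻ ω, (G ω) ^ (4:ℕ) ∂P with hIGdef
  have hbound : ∀ ε ∈ Ioi (0:ℝ),
      (∫ ω, ((X ε t ω - x t) / ε - x1 t ω) ^ 2 ∂P) ≤ ε ^ 2 * (CB ^ 2 * IG.toReal) := by
    intro ε hε
    rw [mem_Ioi] at hε
    have hmeasD : AEStronglyMeasurable (fun ω => ((X ε t ω - x t) / ε - x1 t ω) ^ 2) P :=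
      (((((hXmeas ε t).sub measurable_const).div_const ε).sub (hx1meas t)).pow_const
        2).aestronglyMeasurable
    rw [integral_eq_lintegral_of_nonneg_ae (Eventually.of_forall (fun ω => sq_nonneg _)) hmeasD]
    have h1 : ∫⁻ ω, ENNReal.ofReal (((X ε t ω - x t) / ε - x1 t ω) ^ 2) ∂P
        ≤ ENNReal.ofReal (ε ^ 2 * CB ^ 2) * IG := by
      calc ∫⁻ ω, ENNReal.ofReal (((X ε t ω - x t) / ε - x1 t ω) ^ 2) ∂P
          ≤ ∫⁻ ω, ENNReal.ofReal (ε ^ 2 * CB ^ 2) * (G ω) ^ (4:ℕ) ∂P :=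
            lintegral_mono (hptw ε hε)
        _ = ENNReal.ofReal (ε ^ 2 * CB ^ 2) * IG :=
            lintegral_const_mul _ (hGmeas.pow_const 4)
    calc (∫⁻ ω, ENNReal.ofReal (((X ε t ω - x t) / ε - x1 t ω) ^ 2) ∂P).toReal
        ≤ (ENNReal.ofReal (ε ^ 2 * CB ^ 2) * IG).toReal :=
          ENNReal.toReal_mono (ENNReal.mul_ne_top ENNReal.ofReal_ne_top hG4.ne) h1
      _ = ε ^ 2 * (CB ^ 2 * IG.toReal) := by
          rw [ENNReal.toReal_mul, ENNReal.toReal_ofReal (by positivity)]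
          ring
  have hnn : ∀ ε : ℝ, 0 ≤ ∫ ω, ((X ε t ω - x t) / ε - x1 t ω) ^ 2 ∂P :=
    fun ε => integral_nonneg (fun ω => sq_nonneg _)
  refine squeeze_zero' (Eventually.of_forall hnn)
    (Filter.eventually_of_mem self_mem_nhdsWithin hbound) ?_
  have hcont : Tendsto (fun ε : ℝ => ε ^ 2 * (CB ^ 2 * IG.toReal)) (nhds 0) (nhds 0) := by
    have hc : Continuous (fun ε : ℝ => ε ^ 2 * (CB ^ 2 * IG.toReal)) :=
      (continuous_pow 2).mul continuous_const
    have h := hc.tendsto (0:ℝ)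
    simpa using h
  exact hcont.mono_left nhdsWithin_le_nhds
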